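/- The function t ↦ t·φ(t), where φ(t) = (1 + t)·ln(1 + 1/t) − 1, is nondecreasing on [1, ∞); consequently φ(t) ≥ (2·ln 2 − 1)/t for all t ≥ 1. -/

import Mathlib

open Real Set

lemma log_ge_aux : ∀ u : ℝ, 0 ≤ u → 2 * u / (2 + u) ≤ Real.log (1 + u) := by
  have key : MonotoneOn (fun u : ℝ => Real.log (1 + u) - 2 * u / (2 + u)) (Set.Ici 0) := by
    have hd : ∀ u : ℝ, 0 < u → HasDerivAt (fun u : ℝ => Real.log (1 + u) - 2 * u / (2 + u))
        (1 / (1 + u) - 4 / (2 + u) ^ 2) u := by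
      intro u hu
      have h1 : (1 : ℝ) + u ≠ 0 := by positivity
      have h2 : (2 : ℝ) + u ≠ 0 := by positivity
      have hlog : HasDerivAt (fun u : ℝ => Real.log (1 + u)) (1 / (1 + u)) u := by
        simpa using ((hasDerivAt_id u).const_add 1).log h1
      have hq : HasDerivAt (fun u : ℝ => 2 * u / (2 + u)) (4 / (2 + u) ^ 2) u := by
        have h := HasDerivAt.div ((hasDerivAt_id u).const_mul 2) ((hasDerivAt_id u).const_add 2) h2
        refine h.congr_deriv ?_
        simp only [id_eq, mul_one]
        rw [div_eq_div_iff (by positivity) (by positivity)]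
        ring
      exact hlog.sub hq
    apply monotoneOn_of_deriv_nonneg (convex_Ici 0)
    · apply ContinuousOn.sub
      · apply ContinuousOn.log (by fun_prop)
        intro x hx
        simp only [Set.mem_Ici] at hx
        positivity
      · apply ContinuousOn.div (by fun_prop) (by fun_prop)
        intro x hx
        simp only [Set.mem_Ici] at hx
        positivity
    · intro x hx
      rw [interior_Ici] at hx
      exact ((hd x hx).differentiableAt).differentiableWithinAt
    · intro x hx
      rw [interior_Ici] at hx
      have hx' : (0 : ℝ) < x := hx
      rw [(hd x hx').deriv]
      rw [sub_nonneg, div_le_div_iff₀ (by positivity) (by positivity)]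
      nlinarith [sq_nonneg x]
  intro u hu
  have := key (Set.self_mem_Ici) (Set.mem_Ici.mpr hu) hu
  simp only [Real.log_one] at this
  norm_num at this
  linarith

theorem t_mul_phi_monotone_and_lower_bound :
    MonotoneOn (fun t : ℝ => t * ((1 + t) * Real.log (1 + 1 / t) - 1)) (Set.Ici 1) ∧
    ∀ t : ℝ, 1 ≤ t →
      (1 + t) * Real.log (1 + 1 / t) - 1 ≥ (2 * Real.log 2 - 1) / t := by
  have hderiv : ∀ t : ℝ, 0 < t →
      HasDerivAt (fun t : ℝ => t * ((1 + t) * Real.log (1 + 1 / t) - 1))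
        ((2 * t + 1) * Real.log (1 + 1 / t) - 2) t := by
    intro t ht
    have h0 : t ≠ 0 := ht.ne'
    have h1 : (1 : ℝ) + 1 / t ≠ 0 := by positivity
    have hinv : HasDerivAt (fun t : ℝ => 1 + 1 / t) (-(t ^ 2)⁻¹) t := by
      simpa [one_div] using (hasDerivAt_inv h0).const_add (1 : ℝ)
    have hL : HasDerivAt (fun t : ℝ => Real.log (1 + 1 / t))
        (-(t ^ 2)⁻¹ / (1 + 1 / t)) t := hinv.log h1
    have ha : HasDerivAt (fun t : ℝ => 1 + t) 1 t := (hasDerivAt_id t).const_add 1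
    have hb : HasDerivAt (fun t : ℝ => (1 + t) * Real.log (1 + 1 / t) - 1)
        (1 * Real.log (1 + 1 / t) + (1 + t) * (-(t ^ 2)⁻¹ / (1 + 1 / t))) t :=
      (ha.mul hL).sub_const 1
    have hf := (hasDerivAt_id t).mul hb
    refine hf.congr_deriv ?_
    simp only [id_eq]
    have ht1 : (1 : ℝ) + 1 / t = (t + 1) / t := by field_simp
    rw [ht1]
    field_simp
    ring
  have hmono : MonotoneOn (fun t : ℝ => t * ((1 + t) * Real.log (1 + 1 / t) - 1)) (Set.Ici 1) := by
    apply monotoneOn_of_deriv_nonneg (convex_Ici 1)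
    · apply ContinuousOn.mul continuousOn_id
      apply ContinuousOn.sub _ continuousOn_const
      apply ContinuousOn.mul (by fun_prop)
      apply ContinuousOn.log
      · apply ContinuousOn.add continuousOn_const
        apply ContinuousOn.div continuousOn_const continuousOn_id
        intro x hx
        simp only [Set.mem_Ici] at hx
        positivity
      · intro x hx
        simp only [Set.mem_Ici] at hx
        positivity
    · intro x hx
      rw [interior_Ici] at hx
      exact ((hderiv x (by linarith [hx.out])).differentiableAt).differentiableWithinAt
    · intro x hx
      rw [interior_Ici] at hx
      have hx1 : (1 : ℝ) < x := hx
      have hx0 : (0 : ℝ) < x := by linarith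
      rw [(hderiv x hx0).deriv]
      have hlog := log_ge_aux (1 / x) (by positivity)
      have h2 : 2 * (1 / x) / (2 + 1 / x) = 2 / (2 * x + 1) := by
        rw [div_eq_div_iff (by positivity) (by positivity)]
        field_simp
      rw [h2] at hlog
      have : 2 / (2 * x + 1) * (2 * x + 1) ≤ Real.log (1 + 1 / x) * (2 * x + 1) := by
        apply mul_le_mul_of_nonneg_right hlog (by positivity)
      rw [div_mul_cancel₀ _ (by positivity : (2 * x + 1) ≠ 0)] at this
      linarith
  refine ⟨hmono, fun t ht => ?_⟩
  have ht0 : (0 : ℝ) < t := by linarith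
  have h1 := hmono (Set.self_mem_Ici) (Set.mem_Ici.mpr ht) ht
  simp only at h1
  have hf1 : (1 : ℝ) * ((1 + 1) * Real.log (1 + 1 / 1) - 1) = 2 * Real.log 2 - 1 := by
    norm_num
  rw [hf1] at h1
  rw [ge_iff_le, div_le_iff₀ ht0]
  linarith [h1]
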